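/- Let d = d₁ + ⋯ + d_r with r ≥ 2 and d_j ≥ 1, and let V : ℤ^d → ℂ be Γ-periodic. Then V is (d₁,…,d_{r-1}) ⊕ d_r-separable if and only if V is (s,t)-separable for every 1 ≤ i < m ≤ r-1 and every index s in block i and t in block m. -/
import Mathlib


open scoped BigOperators

/-- `f` depends only on the coordinates in `S`. -/
def DependsOnlyOn {d : ℕ} (S : Set (Fin d)) (f : (Fin d → ℤ) → ℂ) : Prop :=
  ∀ n n' : Fin d → ℤ, (∀ j ∈ S, n j = n' j) → f n = f n'

/-- `(s,t)`-separability. -/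
def SepPair {d : ℕ} (s t : Fin d) (V : (Fin d → ℤ) → ℂ) : Prop :=
  ∃ Vs Vt : (Fin d → ℤ) → ℂ,
    DependsOnlyOn ({t} : Set (Fin d))ᶜ Vs ∧
    DependsOnlyOn ({s} : Set (Fin d))ᶜ Vt ∧
    ∀ n, V n = Vs n + Vt n

/-- `Γ`-periodicity for `Γ = q₁ℤ ⊕ ⋯ ⊕ q_dℤ`. -/
def IsPeriodic {d : ℕ} (q : Fin d → ℕ) (V : (Fin d → ℤ) → ℂ) : Prop :=
  ∀ (n : Fin d → ℤ) (j : Fin d),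
    V (fun i => n i + if i = j then (q i : ℤ) else 0) = V n

/-- The offset `d₀ + ⋯ + d_{i-1}` of the `i`-th block. -/
def blockOffset {r : ℕ} (dv : Fin r → ℕ) (i : Fin r) : ℕ :=
  ∑ j ∈ Finset.Iio i, dv j

/-- The set of coordinate indices lying in the `i`-th block. -/
def blockSet {r d : ℕ} (dv : Fin r → ℕ) (i : Fin r) : Set (Fin d) :=
  {s | blockOffset dv i ≤ (s : ℕ) ∧ (s : ℕ) < blockOffset dv i + dv i}

/-- `(d₁,…,d_r)`-separability: `V` is a sum of functions each depending only on the
coordinates of one block. -/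
def BlockSep {r d : ℕ} (dv : Fin r → ℕ) (V : (Fin d → ℤ) → ℂ) : Prop :=
  ∃ Vb : Fin r → (Fin d → ℤ) → ℂ,
    (∀ i, DependsOnlyOn (blockSet dv i) (Vb i)) ∧ ∀ n, V n = ∑ i, Vb i n


/-- `(d₁,…,d_{r-1}) ⊕ d_r`-separability: `V = ∑_{i<r-1} V_i` where each `V_i`
depends only on the coordinates of block `i` together with those of block `r`. -/
def OplusSep {r d : ℕ} (dv : Fin r → ℕ) (hr : 0 < r) (V : (Fin d → ℤ) → ℂ) : Prop :=
  ∃ Vb : Fin r → (Fin d → ℤ) → ℂ,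
    (∀ i, DependsOnlyOn (blockSet dv i ∪ blockSet dv ⟨r - 1, by omega⟩) (Vb i)) ∧
    ∀ n, V n = ∑ i ∈ Finset.univ \ {(⟨r - 1, by omega⟩ : Fin r)}, Vb i n

namespace OplusAux

variable {d : ℕ}

/-- The rectangle (vanishing mixed difference) condition. -/
def Rect (s t : Fin d) (V : (Fin d → ℤ) → ℂ) : Prop :=
  ∀ n b c, V (Function.update (Function.update n s b) t c) + V n
    = V (Function.update n s b) + V (Function.update n t c)

/-- Zero out the coordinates in `S`. -/
def zeroOn (S : Finset (Fin d)) (n : Fin d → ℤ) : Fin d → ℤ :=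
  fun j => if j ∈ S then 0 else n j

lemma zeroOn_empty (n : Fin d → ℤ) : zeroOn ∅ n = n := by
  funext j; simp [zeroOn]

lemma zeroOn_insert (s : Fin d) (S : Finset (Fin d)) (n : Fin d → ℤ) :
    zeroOn (insert s S) n = zeroOn S (Function.update n s 0) := by
  funext j
  by_cases hj : j = s
  · subst hj; by_cases h : j ∈ S <;> simp [zeroOn, h]
  · simp [zeroOn, hj, Function.update_of_ne hj]

lemma zeroOn_union (S T : Finset (Fin d)) (n : Fin d → ℤ) :
    zeroOn S (zeroOn T n) = zeroOn (S ∪ T) n := by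
  funext j
  by_cases h1 : j ∈ S <;> by_cases h2 : j ∈ T <;> simp [zeroOn, h1, h2]

lemma rect_of_sepPair {s t : Fin d} {V : (Fin d → ℤ) → ℂ}
    (h : SepPair s t V) : Rect s t V := by
  obtain ⟨Vs, Vt, hVs, hVt, hsum⟩ := h
  intro n b c
  have e1 : Vs (Function.update (Function.update n s b) t c) = Vs (Function.update n s b) := by
    apply hVs
    intro j hj
    have hjt : j ≠ t := by simpa using hj
    rw [Function.update_of_ne hjt]
  have e2 : Vt (Function.update (Function.update n s b) t c) = Vt (Function.update n t c) := by
    apply hVt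
    intro j hj
    have hjs : j ≠ s := by simpa using hj
    by_cases hjt : j = t
    · subst hjt; simp
    · rw [Function.update_of_ne hjt, Function.update_of_ne hjs, Function.update_of_ne hjt]
  have e3 : Vs (Function.update n t c) = Vs n := by
    apply hVs
    intro j hj
    have hjt : j ≠ t := by simpa using hj
    rw [Function.update_of_ne hjt]
  have e4 : Vt (Function.update n s b) = Vt n := by
    apply hVt
    intro j hj
    have hjs : j ≠ s := by simpa using hj
    rw [Function.update_of_ne hjs]
  rw [hsum, hsum, hsum, hsum, e1, e2, e3, e4]
  ring

lemma Rect.symm {s t : Fin d} {V : (Fin d → ℤ) → ℂ} (hst : s ≠ t) (h : Rect s t V) :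
    Rect t s V := by
  intro n b c
  have h' := h n c b
  rw [Function.update_comm hst c b n] at h'
  linear_combination h'

lemma invA {V : (Fin d → ℤ) → ℂ} (S : Finset (Fin d)) (t : Fin d) :
    t ∉ S → (∀ s ∈ S, Rect s t V) → ∀ (n : Fin d → ℤ) (c : ℤ),
    V (zeroOn S (Function.update n t c)) - V (Function.update n t c)
      = V (zeroOn S n) - V n := by
  classical
  induction S using Finset.induction_on with
  | empty => intro _ _ n c; simp [zeroOn_empty]
  | @insert s S hsS ih =>
    intro ht hR n c
    have hts : t ≠ s := fun h => ht (by simp [h])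
    have htS : t ∉ S := fun h => ht (Finset.mem_insert_of_mem h)
    have hRs : Rect s t V := hR s (Finset.mem_insert_self _ _)
    rw [zeroOn_insert, zeroOn_insert]
    have hcomm : Function.update (Function.update n t c) s 0
        = Function.update (Function.update n s 0) t c :=
      Function.update_comm hts c 0 n
    rw [hcomm]
    have h1 := ih htS (fun s' hs' => hR s' (Finset.mem_insert_of_mem hs'))
      (Function.update n s 0) c
    have h2 := hRs n 0 c
    linear_combination h1 + h2

lemma invA' {F : (Fin d → ℤ) → ℂ} (T : Finset (Fin d)) :
    (∀ t ∈ T, ∀ n c, F (Function.update n t c) = F n) →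
    ∀ n, F (zeroOn T n) = F n := by
  classical
  induction T using Finset.induction_on with
  | empty => intro _ n; rw [zeroOn_empty]
  | @insert s T hsT ih =>
    intro h n
    rw [zeroOn_insert, ih (fun t ht => h t (Finset.mem_insert_of_mem ht))]
    exact h s (Finset.mem_insert_self _ _) n 0

lemma dependsOnlyOn_of_update {S : Set (Fin d)} {F : (Fin d → ℤ) → ℂ}
    (h : ∀ t, t ∉ S → ∀ n c, F (Function.update n t c) = F n) :
    DependsOnlyOn S F := by
  classical
  intro n n' hagree
  suffices H : ∀ T : Finset (Fin d), (∀ t ∈ T, t ∉ S) →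
      ∀ m : Fin d → ℤ, (∀ j, j ∉ T → m j = n' j) → F m = F n' by
    apply H (Finset.univ.filter (fun j => j ∉ S)) (by simp) n
    intro j hj
    simp only [Finset.mem_filter, Finset.mem_univ, true_and, not_not] at hj
    exact hagree j hj
  intro T
  induction T using Finset.induction_on with
  | empty =>
    intro _ m hm
    have : m = n' := funext fun j => hm j (by simp)
    rw [this]
  | @insert t T htT ih =>
    intro hT m hm
    have h1 : F m = F (Function.update m t (n' t)) :=
      (h t (hT t (Finset.mem_insert_self _ _)) m (n' t)).symm
    rw [h1]
    apply ih (fun t' ht' => hT t' (Finset.mem_insert_of_mem ht'))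
    intro j hj
    by_cases hjt : j = t
    · subst hjt; simp
    · rw [Function.update_of_ne hjt]
      exact hm j (by simp [hjt, hj])

lemma blockOffset_add_self {r : ℕ} (dv : Fin r → ℕ) (i : Fin r) :
    blockOffset dv i + dv i = ∑ j ∈ Finset.Iic i, dv j := by
  rw [← Finset.Iio_insert, Finset.sum_insert (by simp), blockOffset, add_comm]

lemma blockSet_disjoint {r d : ℕ} (dv : Fin r → ℕ) {i m : Fin r} (him : i ≠ m)
    {s : Fin d} (hs : s ∈ blockSet dv i) (hm : s ∈ blockSet dv m) : False := by
  have key : ∀ a b : Fin r, a < b → s ∈ blockSet dv a → s ∈ blockSet dv b → False := by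
    intro a b hab ha hb
    have h1 : blockOffset dv a + dv a ≤ blockOffset dv b := by
      rw [blockOffset_add_self, blockOffset]
      apply Finset.sum_le_sum_of_subset
      intro k hk
      simp only [Finset.mem_Iic] at hk
      simp only [Finset.mem_Iio]
      exact lt_of_le_of_lt hk hab
    obtain ⟨ha1, ha2⟩ := ha
    obtain ⟨hb1, hb2⟩ := hb
    omega
  rcases him.lt_or_gt with h | h
  · exact key i m h hs hm
  · exact key m i h hm hs

lemma Iic_last {r : ℕ} (hr : 0 < r) :
    Finset.Iic (⟨r - 1, by omega⟩ : Fin r) = Finset.univ := by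
  ext k
  simp only [Finset.mem_Iic, Finset.mem_univ, iff_true, Fin.le_def]
  have := k.isLt
  omega

lemma exists_block {r d : ℕ} (dv : Fin r → ℕ) (hr : 0 < r) (hd : d = ∑ j, dv j)
    (t : Fin d) : ∃ j : Fin r, t ∈ blockSet dv j := by
  classical
  set S := Finset.univ.filter (fun j : Fin r => (t : ℕ) < blockOffset dv j + dv j) with hSdef
  have hne : S.Nonempty := by
    refine ⟨⟨r - 1, by omega⟩, ?_⟩
    simp only [hSdef, Finset.mem_filter, Finset.mem_univ, true_and]
    rw [blockOffset_add_self, Iic_last hr]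
    have := t.isLt
    omega
  set j := S.min' hne with hj
  have hjS : j ∈ S := S.min'_mem hne
  have hj2 : (t : ℕ) < blockOffset dv j + dv j := by
    simpa [hSdef] using hjS
  refine ⟨j, ?_, hj2⟩
  by_contra hcon
  push_neg at hcon
  have hj0 : 0 < (j : ℕ) := by
    by_contra h0
    have hIio : Finset.Iio j = ∅ := by
      ext k
      simp only [Finset.mem_Iio, Finset.notMem_empty, iff_false, Fin.lt_def]
      omega
    have : blockOffset dv j = 0 := by rw [blockOffset, hIio, Finset.sum_empty]
    omega
  have hlt : (⟨(j : ℕ) - 1, by have := j.isLt; omega⟩ : Fin r) ∈ S := by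
    simp only [hSdef, Finset.mem_filter, Finset.mem_univ, true_and]
    have heq : blockOffset dv ⟨(j : ℕ) - 1, by have := j.isLt; omega⟩
        + dv ⟨(j : ℕ) - 1, by have := j.isLt; omega⟩ = blockOffset dv j := by
      rw [blockOffset_add_self]
      rw [show blockOffset dv j = ∑ k ∈ Finset.Iio j, dv k from rfl]
      congr 1
      ext k
      simp only [Finset.mem_Iic, Finset.mem_Iio, Fin.le_def, Fin.lt_def]
      show (k : ℕ) ≤ (j : ℕ) - 1 ↔ (k : ℕ) < (j : ℕ)
      omega
    omega
  have h2 := S.min'_le _ hlt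
  have h4 : (j : ℕ) ≤ (j : ℕ) - 1 := Fin.le_def.mp h2
  omega

/-- The `i`-th block, as a `Finset`. -/
def Bf {r : ℕ} (d : ℕ) (dv : Fin r → ℕ) (i : Fin r) : Finset (Fin d) :=
  Finset.univ.filter
    (fun s => blockOffset dv i ≤ (s : ℕ) ∧ (s : ℕ) < blockOffset dv i + dv i)

lemma mem_Bf {r d : ℕ} {dv : Fin r → ℕ} {i : Fin r} {s : Fin d} :
    s ∈ Bf d dv i ↔ s ∈ blockSet dv i := by
  simp [Bf, blockSet]

lemma claimC {r d : ℕ} {dv : Fin r → ℕ} {V : (Fin d → ℤ) → ℂ}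
    (hrect : ∀ (k j : Fin r), (k : ℕ) < r - 1 → (j : ℕ) < r - 1 → k ≠ j →
      ∀ s t : Fin d, s ∈ blockSet dv k → t ∈ blockSet dv j → Rect s t V)
    (K : Finset (Fin r)) :
    (∀ k ∈ K, (k : ℕ) < r - 1) → ∀ n : Fin d → ℤ,
      V (zeroOn (K.biUnion (fun k => Bf d dv k)) n)
        = V n - ∑ k ∈ K, (V n - V (zeroOn (Bf d dv k) n)) := by
  classical
  induction K using Finset.induction_on with
  | empty => intro _ n; simp [zeroOn_empty]
  | @insert j K hjK ih =>
    intro hK n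
    have hjlt : (j : ℕ) < r - 1 := hK j (Finset.mem_insert_self _ _)
    have hKlt : ∀ k ∈ K, (k : ℕ) < r - 1 := fun k hk => hK k (Finset.mem_insert_of_mem hk)
    rw [Finset.biUnion_insert, Finset.union_comm, ← zeroOn_union,
      ih hKlt (zeroOn (Bf d dv j) n), Finset.sum_insert hjK]
    have hterm : ∀ k ∈ K,
        V (zeroOn (Bf d dv j) n) - V (zeroOn (Bf d dv k) (zeroOn (Bf d dv j) n))
          = V n - V (zeroOn (Bf d dv k) n) := by
      intro k hk
      have hkj : k ≠ j := fun h => hjK (h ▸ hk)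
      have key := invA' (F := fun m => V m - V (zeroOn (Bf d dv k) m)) (Bf d dv j)
        (fun t ht n' c => by
          have htB : t ∉ Bf d dv k := fun h =>
            blockSet_disjoint dv hkj (mem_Bf.mp h) (mem_Bf.mp ht)
          have h5 := invA (Bf d dv k) t htB
            (fun s hs => hrect k j (hKlt k hk) hjlt hkj s t (mem_Bf.mp hs) (mem_Bf.mp ht))
            n' c
          show V (Function.update n' t c) - V (zeroOn (Bf d dv k) (Function.update n' t c))
              = V n' - V (zeroOn (Bf d dv k) n')
          linear_combination -h5) n
      exact key
    rw [Finset.sum_congr rfl hterm]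
    ring

end OplusAux

open OplusAux in
/-- Theorem 2.4: `V` is `(d₁,…,d_{r-1}) ⊕ d_r`-separable iff it is `(s,t)`-separable
for all pairs of indices `s, t` lying in distinct blocks among the first `r-1` blocks. -/
theorem oplusSep_iff_sepPair {r d : ℕ} (dv : Fin r → ℕ) (hr : 2 ≤ r)
    (hdv : ∀ j, 1 ≤ dv j) (hd : d = ∑ j, dv j)
    (q : Fin d → ℕ) (hq : ∀ j, 0 < q j)
    (V : (Fin d → ℤ) → ℂ) (hV : IsPeriodic q V) :
    OplusSep dv (by omega) V ↔
      ∀ i m : Fin r, i < m → (m : ℕ) < r - 1 → ∀ s t : Fin d,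
        s ∈ blockSet dv i → t ∈ blockSet dv m → SepPair s t V := by
  classical
  constructor
  · rintro ⟨Vb, hdep, hsum⟩ i m him hm s t hs ht
    have hmv : (m : ℕ) ≠ r - 1 := by omega
    have hiv : (i : ℕ) < r - 1 := by
      have := Fin.lt_def.mp him; omega
    have hmlast : m ≠ (⟨r - 1, by omega⟩ : Fin r) := fun h => hmv (by rw [h])
    have hilast : i ≠ (⟨r - 1, by omega⟩ : Fin r) := fun h => (by omega : (i:ℕ) ≠ r - 1) (by rw [h])
    have him' : i ≠ m := ne_of_lt him
    refine ⟨fun n => ∑ k ∈ ((Finset.univ \ {(⟨r - 1, by omega⟩ : Fin r)}).erase m), Vb k n,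
      Vb m, ?_, ?_, ?_⟩
    · intro n n' hnn'
      apply Finset.sum_congr rfl
      intro k hk
      simp only [Finset.mem_erase, Finset.mem_sdiff, Finset.mem_singleton, Finset.mem_univ,
        true_and] at hk
      apply hdep k
      intro x hx
      apply hnn'
      simp only [Set.mem_compl_iff, Set.mem_singleton_iff]
      rcases hx with hx | hx
      · exact fun h => blockSet_disjoint dv hk.1 (h ▸ hx) ht
      · exact fun h => blockSet_disjoint dv (Ne.symm hmlast) (h ▸ hx) ht
    · intro n n' hnn'
      apply hdep m
      intro x hx
      apply hnn'
      simp only [Set.mem_compl_iff, Set.mem_singleton_iff]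
      rcases hx with hx | hx
      · exact fun h => blockSet_disjoint dv (Ne.symm him') (h ▸ hx) hs
      · exact fun h => blockSet_disjoint dv (Ne.symm hilast) (h ▸ hx) hs
    · intro n
      have hmem : m ∈ Finset.univ \ {(⟨r - 1, by omega⟩ : Fin r)} := by
        simp [hmlast]
      have h6 := Finset.add_sum_erase (Finset.univ \ {(⟨r - 1, by omega⟩ : Fin r)})
        (fun k => Vb k n) hmem
      show V n = (∑ k ∈ ((Finset.univ \ {(⟨r - 1, by omega⟩ : Fin r)}).erase m), Vb k n) + Vb m n
      refine (hsum n).trans ?_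
      linear_combination -h6
  · intro hyp
    have hrect : ∀ (k j : Fin r), (k : ℕ) < r - 1 → (j : ℕ) < r - 1 → k ≠ j →
        ∀ s t : Fin d, s ∈ blockSet dv k → t ∈ blockSet dv j → Rect s t V := by
      intro k j hk hj hkj s t hs ht
      have hst : s ≠ t := fun h => blockSet_disjoint dv hkj (h ▸ hs) ht
      rcases hkj.lt_or_gt with h | h
      · exact rect_of_sepPair (hyp k j h hj s t hs ht)
      · exact Rect.symm hst.symm (rect_of_sepPair (hyp j k h hk t s ht hs))
    have hlastval : ∀ h : r - 1 < r, ((⟨r - 1, h⟩ : Fin r) : ℕ) = r - 1 := fun _ => rfl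
    set K : Finset (Fin r) := Finset.univ \ {(⟨r - 1, by omega⟩ : Fin r)} with hK
    have hKlt : ∀ k ∈ K, (k : ℕ) < r - 1 := by
      intro k hk
      simp only [hK, Finset.mem_sdiff, Finset.mem_univ, Finset.mem_singleton, true_and] at hk
      have h1 := k.isLt
      have h2 : (k : ℕ) ≠ r - 1 := fun h => hk (Fin.ext h)
      omega
    set U : Finset (Fin d) := K.biUnion (fun k => Bf d dv k) with hU
    set i0 : Fin r := ⟨0, by omega⟩ with hi0
    have hi0K : i0 ∈ K := by
      simp only [hK, Finset.mem_sdiff, Finset.mem_univ, Finset.mem_singleton, true_and]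
      intro h
      have := congrArg Fin.val h
      simp only [hi0] at this
      omega
    -- dependence of V(zeroOn U ·) on the last block only
    have hUdep : ∀ n n' : Fin d → ℤ,
        (∀ x ∈ blockSet dv i0 ∪ blockSet dv (⟨r - 1, by omega⟩ : Fin r), n x = n' x) →
        zeroOn U n = zeroOn U n' := by
      intro n n' hnn'
      funext x
      by_cases hx : x ∈ U
      · simp [zeroOn, hx]
      · simp only [zeroOn, hx, if_neg, if_false]
        obtain ⟨j, hj⟩ := exists_block dv (by omega) hd x
        have hjlast : j = (⟨r - 1, by omega⟩ : Fin r) := by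
          by_contra hne
          apply hx
          rw [hU]
          refine Finset.mem_biUnion.mpr ⟨j, ?_, mem_Bf.mpr hj⟩
          simp [hK, hne]
        exact hnn' x (Set.mem_union_right _ (hjlast ▸ hj))
    -- dependence of the block differences
    have hFdep : ∀ k : Fin r, (k : ℕ) < r - 1 → ∀ n n' : Fin d → ℤ,
        (∀ x ∈ blockSet dv k ∪ blockSet dv (⟨r - 1, by omega⟩ : Fin r), n x = n' x) →
        V n - V (zeroOn (Bf d dv k) n) = V n' - V (zeroOn (Bf d dv k) n') := by
      intro k hk
      have hdo : DependsOnlyOn (blockSet dv k ∪ blockSet dv (⟨r - 1, by omega⟩ : Fin r))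
          (fun n => V n - V (zeroOn (Bf d dv k) n)) := by
        apply dependsOnlyOn_of_update
        intro t ht n c
        obtain ⟨j, hj⟩ := exists_block dv (by omega) hd t
        have hjk : j ≠ k := fun h => ht (Set.mem_union_left _ (h ▸ hj))
        have hjlast : j ≠ (⟨r - 1, by omega⟩ : Fin r) :=
          fun h => ht (Set.mem_union_right _ (h ▸ hj))
        have hjlt : (j : ℕ) < r - 1 := by
          have h1 := j.isLt
          have h2 : (j : ℕ) ≠ r - 1 := fun h => hjlast (Fin.ext h)
          omega
        have htBk : t ∉ Bf d dv k := fun h =>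
          blockSet_disjoint dv hjk hj (mem_Bf.mp h)
        have h5 := invA (Bf d dv k) t htBk
          (fun s hs => hrect k j hk hjlt hjk.symm s t (mem_Bf.mp hs) hj) n c
        show V (Function.update n t c) - V (zeroOn (Bf d dv k) (Function.update n t c))
            = V n - V (zeroOn (Bf d dv k) n)
        linear_combination -h5
      exact fun n n' h => hdo n n' h
    refine ⟨fun k n => (if k = i0 then V (zeroOn U n) else 0)
        + (if (k : ℕ) < r - 1 then V n - V (zeroOn (Bf d dv k) n) else 0), ?_, ?_⟩
    · intro k
      intro n n' hnn'
      show (if k = i0 then V (zeroOn U n) else 0)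
          + (if (k : ℕ) < r - 1 then V n - V (zeroOn (Bf d dv k) n) else 0)
        = (if k = i0 then V (zeroOn U n') else 0)
          + (if (k : ℕ) < r - 1 then V n' - V (zeroOn (Bf d dv k) n') else 0)
      congr 1
      · by_cases h : k = i0
        · rw [if_pos h, if_pos h]
          exact congrArg V (hUdep n n' (by rw [← h]; exact hnn'))
        · rw [if_neg h, if_neg h]
      · by_cases h : (k : ℕ) < r - 1
        · rw [if_pos h, if_pos h]
          exact hFdep k h n n' hnn'
        · rw [if_neg h, if_neg h]
    · intro n
      have hmain := claimC hrect K hKlt n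
      show V n = ∑ k ∈ K, ((if k = i0 then V (zeroOn U n) else 0)
          + (if (k : ℕ) < r - 1 then V n - V (zeroOn (Bf d dv k) n) else 0))
      rw [Finset.sum_add_distrib]
      have e1 : (∑ k ∈ K, if k = i0 then V (zeroOn U n) else 0) = V (zeroOn U n) := by
        rw [Finset.sum_ite_eq' K i0 (fun _ => V (zeroOn U n))]
        rw [if_pos hi0K]
      have e2 : (∑ k ∈ K, if (k : ℕ) < r - 1 then V n - V (zeroOn (Bf d dv k) n) else 0)
          = ∑ k ∈ K, (V n - V (zeroOn (Bf d dv k) n)) := by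
        apply Finset.sum_congr rfl
        intro k hk
        rw [if_pos (hKlt k hk)]
      rw [e1, e2]
      rw [← hU] at hmain
      linear_combination -hmain
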